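/- Part-equivariance of the per-part PCA frames (hard weights): let W ∈ {0,1}^{n×k} with each row summing to 1, and denote by w_j the j-th column of W. Let X ∈ ℝ^{n×3} be such that for each j the w_j-weighted covariance of X has three distinct eigenvalues, fix g₁,…,g_k ∈ E(3), and set X' = Σ_{l=1}^k w_l ⊙ (ρ(g_l)X). Then for each j, the w_j-weighted PCA frame satisfies F_j(X') = g_j F_j(X). -/
import Mathlib


open Matrix

noncomputable section

/-- The all-ones vector in `ℝⁿ`. -/
def onesVec (n : ℕ) : Fin n → ℝ := fun _ => 1

/-- Action of `g = (R, t) ∈ E(3)` on `V ∈ ℝ^{n×3}`: `ρ(g)V = V Rᵀ + 𝟏 tᵀ`. -/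
def euclAct {n : ℕ} (R : Matrix (Fin 3) (Fin 3) ℝ) (t : Fin 3 → ℝ)
    (V : Matrix (Fin n) (Fin 3) ℝ) : Matrix (Fin n) (Fin 3) ℝ :=
  V * Rᵀ + Matrix.vecMulVec (onesVec n) t

/-- Inverse action: `ρ(g)⁻¹ V = (V - 𝟏 tᵀ) R`. -/
def euclActInv {n : ℕ} (R : Matrix (Fin 3) (Fin 3) ℝ) (t : Fin 3 → ℝ)
    (V : Matrix (Fin n) (Fin 3) ℝ) : Matrix (Fin n) (Fin 3) ℝ :=
  (V - Matrix.vecMulVec (onesVec n) t) * R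

/-- The weighted centroid `t(V) = (1/(𝟏ᵀw)) Vᵀ w`. -/
def centroid {n : ℕ} (w : Fin n → ℝ) (V : Matrix (Fin n) (Fin 3) ℝ) : Fin 3 → ℝ :=
  (∑ i, w i)⁻¹ • (Vᵀ.mulVec w)

/-- The weighted covariance `C(V) = (V − 𝟏 t(V)ᵀ)ᵀ diag(w) (V − 𝟏 t(V)ᵀ)`. -/
def wcov {n : ℕ} (w : Fin n → ℝ) (V : Matrix (Fin n) (Fin 3) ℝ) :
    Matrix (Fin 3) (Fin 3) ℝ :=
  (V - Matrix.vecMulVec (onesVec n) (centroid w V))ᵀ * Matrix.diagonal w *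
    (V - Matrix.vecMulVec (onesVec n) (centroid w V))

/-- `μ` is an eigenvalue of `M`. -/
def IsEigenvalue (M : Matrix (Fin 3) (Fin 3) ℝ) (μ : ℝ) : Prop :=
  ∃ v : Fin 3 → ℝ, v ≠ 0 ∧ M.mulVec v = μ • v

/-- The weighted PCA frame: pairs `(R, t(V))` where the `i`-th column of `R` is a
unit-norm eigenvector of the weighted covariance `C(V)` for the eigenvalue `lam i`. -/
def pcaFrame {n : ℕ} (lam : Fin 3 → ℝ) (w : Fin n → ℝ) (V : Matrix (Fin n) (Fin 3) ℝ) :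
    Set (Matrix (Fin 3) (Fin 3) ℝ × (Fin 3 → ℝ)) :=
  { p | p.2 = centroid w V ∧ ∀ i : Fin 3,
      (fun j => p.1 j i) ⬝ᵥ (fun j => p.1 j i) = 1 ∧
      (wcov w V).mulVec (fun j => p.1 j i) = lam i • (fun j => p.1 j i) }

/-- Row-wise scaling `(a ⊙ B)_{ij} = a_i B_{ij}`. -/
def rowScale {n : ℕ} (a : Fin n → ℝ) (B : Matrix (Fin n) (Fin 3) ℝ) :
    Matrix (Fin n) (Fin 3) ℝ :=
  Matrix.of fun i j => a i * B i j



/-! ### Auxiliary lemmas -/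

lemma centroid_congr {n} (w : Fin n → ℝ) (V V' : Matrix (Fin n) (Fin 3) ℝ)
    (h : ∀ i, w i ≠ 0 → ∀ a, V i a = V' i a) : centroid w V = centroid w V' := by
  unfold centroid
  congr 1
  funext a
  simp only [Matrix.mulVec, dotProduct, Matrix.transpose_apply]
  refine Finset.sum_congr rfl fun i _ => ?_
  by_cases hw : w i = 0
  · simp [hw]
  · rw [h i hw a]

lemma wcov_congr {n} (w : Fin n → ℝ) (V V' : Matrix (Fin n) (Fin 3) ℝ)
    (h : ∀ i, w i ≠ 0 → ∀ a, V i a = V' i a) : wcov w V = wcov w V' := by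
  have hc := centroid_congr w V V' h
  unfold wcov
  rw [hc]
  ext a b
  rw [Matrix.mul_apply, Matrix.mul_apply]
  simp only [Matrix.mul_diagonal, Matrix.transpose_apply, Matrix.sub_apply]
  refine Finset.sum_congr rfl fun m _ => ?_
  by_cases hw : w m = 0
  · simp [hw]
  · rw [h m hw a, h m hw b]

lemma ones_t_mulVec {n} (t : Fin 3 → ℝ) (w : Fin n → ℝ) :
    (Matrix.vecMulVec (onesVec n) t)ᵀ.mulVec w = (∑ i, w i) • t := by
  funext a
  simp [Matrix.mulVec, dotProduct, Matrix.vecMulVec_apply, onesVec, Finset.sum_mul,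
    mul_comm, Finset.mul_sum]

lemma centroid_euclAct {n} (w : Fin n → ℝ) (hw : (∑ i, w i) ≠ 0)
    (R : Matrix (Fin 3) (Fin 3) ℝ) (t : Fin 3 → ℝ) (V : Matrix (Fin n) (Fin 3) ℝ) :
    centroid w (euclAct R t V) = R.mulVec (centroid w V) + t := by
  unfold centroid euclAct
  rw [transpose_add, transpose_mul, transpose_transpose, add_mulVec, ones_t_mulVec,
    ← mulVec_mulVec, smul_add, smul_smul, inv_mul_cancel₀ hw, one_smul, mulVec_smul]

lemma euclAct_sub_centroid {n} (w : Fin n → ℝ) (hw : (∑ i, w i) ≠ 0)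
    (R : Matrix (Fin 3) (Fin 3) ℝ) (t : Fin 3 → ℝ) (V : Matrix (Fin n) (Fin 3) ℝ) :
    euclAct R t V - Matrix.vecMulVec (onesVec n) (centroid w (euclAct R t V))
      = (V - Matrix.vecMulVec (onesVec n) (centroid w V)) * Rᵀ := by
  rw [centroid_euclAct w hw]
  unfold euclAct
  ext i a
  simp [Matrix.mul_apply, Matrix.vecMulVec_apply, onesVec, Matrix.mulVec, dotProduct,
    sub_mul, Finset.sum_sub_distrib, Finset.mul_sum, mul_comm, mul_sub]

lemma wcov_euclAct {n} (w : Fin n → ℝ) (hw : (∑ i, w i) ≠ 0)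
    (R : Matrix (Fin 3) (Fin 3) ℝ) (t : Fin 3 → ℝ) (V : Matrix (Fin n) (Fin 3) ℝ) :
    wcov w (euclAct R t V) = R * wcov w V * Rᵀ := by
  unfold wcov
  rw [euclAct_sub_centroid w hw, transpose_mul, transpose_transpose]
  simp only [Matrix.mul_assoc]

lemma col_mul (R A : Matrix (Fin 3) (Fin 3) ℝ) (i : Fin 3) :
    (fun jj => (R * A) jj i) = R.mulVec (fun jj => A jj i) := by
  funext jj
  simp [Matrix.mul_apply, Matrix.mulVec, dotProduct]

lemma orth_dot (R : Matrix (Fin 3) (Fin 3) ℝ) (hR : Rᵀ * R = 1) (v : Fin 3 → ℝ) :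
    R.mulVec v ⬝ᵥ R.mulVec v = v ⬝ᵥ v := by
  have h1 : R.mulVec v = v ᵥ* Rᵀ := by rw [← Matrix.mulVec_transpose, transpose_transpose]
  rw [dotProduct_mulVec, h1, vecMul_vecMul, hR, vecMul_one]

lemma eig_map (R C : Matrix (Fin 3) (Fin 3) ℝ) (hR : Rᵀ * R = 1) (μ : ℝ) (u : Fin 3 → ℝ)
    (h : C.mulVec u = μ • u) :
    (R * C * Rᵀ).mulVec (R.mulVec u) = μ • (R.mulVec u) := by
  rw [mulVec_mulVec, Matrix.mul_assoc (R * C) Rᵀ R, hR, Matrix.mul_one,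
    ← mulVec_mulVec, h, mulVec_smul]

/-- **Part-equivariance of the per-part PCA frames (hard weights)**: for a hard
partitioning weight matrix `W ∈ {0,1}^{n×k}` with rows summing to `1` (columns `w_j`),
if for each `j` the `w_j`-weighted covariance of `X` has three distinct eigenvalues
`λ^j₁ < λ^j₂ < λ^j₃`, then for any `g₁,…,g_k ∈ E(3)` and
`X' = Σ_l w_l ⊙ (ρ(g_l)X)`, each per-part PCA frame satisfies `F_j(X') = g_j F_j(X)`. -/
theorem part_frames_equivariant {n k : ℕ}
    (W : Matrix (Fin n) (Fin k) ℝ)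
    (hW01 : ∀ i j, W i j = 0 ∨ W i j = 1)
    (hWrow : ∀ i, ∑ j, W i j = 1)
    (hWcol : ∀ j, 0 < ∑ i, W i j)
    (X : Matrix (Fin n) (Fin 3) ℝ)
    (lam : Fin k → Fin 3 → ℝ)
    (hmono : ∀ j, StrictMono (lam j))
    (heig : ∀ j i, IsEigenvalue (wcov (fun i' => W i' j) X) (lam j i))
    (g : Fin k → Matrix (Fin 3) (Fin 3) ℝ × (Fin 3 → ℝ))
    (hg : ∀ l, (g l).1 * (g l).1ᵀ = 1) :
    ∀ j : Fin k,
      pcaFrame (lam j) (fun i => W i j)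
          (∑ l, rowScale (fun i => W i l) (euclAct (g l).1 (g l).2 X)) =
        {p | ∃ q ∈ pcaFrame (lam j) (fun i => W i j) X,
          p = ((g j).1 * q.1, (g j).1.mulVec q.2 + (g j).2)} := by
  intro j
  set R := (g j).1 with hRdef
  set t0 := (g j).2 with ht0def
  set w : Fin n → ℝ := fun i => W i j with hwdef
  have hwsum : (∑ i, w i) ≠ 0 := ne_of_gt (hWcol j)
  have hRorth : R * Rᵀ = 1 := hg j
  have hRorth' : Rᵀ * R = 1 := mul_eq_one_comm.mp hRorth
  set X' := ∑ l, rowScale (fun i => W i l) (euclAct (g l).1 (g l).2 X) with hX'def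
  set E := euclAct R t0 X with hEdef
  -- rows with nonzero weight agree
  have hrows : ∀ i, w i ≠ 0 → ∀ a, X' i a = E i a := by
    intro i hwi a
    have h01 := hW01 i j
    have hWij : W i j = 1 := by
      rcases h01 with h | h
      · exact absurd h hwi
      · exact h
    have hzero : ∀ l, l ≠ j → W i l = 0 := by
      intro l hl
      have hs := hWrow i
      rw [← Finset.add_sum_erase _ _ (Finset.mem_univ j), hWij] at hs
      have hs0 : ∑ l ∈ Finset.univ.erase j, W i l = 0 := by linarith
      have hnn : ∀ l ∈ Finset.univ.erase j, 0 ≤ W i l := by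
        intro l _
        rcases hW01 i l with h | h <;> simp [h]
      have := (Finset.sum_eq_zero_iff_of_nonneg hnn).mp hs0
      exact this l (Finset.mem_erase.mpr ⟨hl, Finset.mem_univ l⟩)
    have : X' i a = ∑ l, W i l * (euclAct (g l).1 (g l).2 X) i a := by
      rw [hX'def]
      rw [Matrix.sum_apply]
      rfl
    rw [this]
    rw [Finset.sum_eq_single j]
    · rw [hWij, one_mul, hEdef]
    · intro l _ hl
      rw [hzero l hl, zero_mul]
    · intro h
      exact absurd (Finset.mem_univ j) h
  have hcX : centroid w X' = centroid w E := centroid_congr w X' E hrows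
  have hCX : wcov w X' = wcov w E := wcov_congr w X' E hrows
  have hc : centroid w X' = R.mulVec (centroid w X) + t0 := by
    rw [hcX, hEdef, centroid_euclAct w hwsum]
  have hC : wcov w X' = R * wcov w X * Rᵀ := by
    rw [hCX, hEdef, wcov_euclAct w hwsum]
  ext p
  simp only [pcaFrame, Set.mem_setOf_eq]
  constructor
  · rintro ⟨hp2, hcols⟩
    refine ⟨(Rᵀ * p.1, centroid w X), ⟨rfl, fun i => ?_⟩, ?_⟩
    · rw [col_mul]
      constructor
      · rw [orth_dot Rᵀ (by rwa [transpose_transpose])]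
        exact (hcols i).1
      · have h1 := (hcols i).2
        rw [hC] at h1
        have h2 := eig_map Rᵀ (R * wcov w X * Rᵀ) (by rwa [transpose_transpose])
          (lam j i) _ h1
        have h3 : Rᵀ * (R * wcov w X * Rᵀ) * (Rᵀ)ᵀ = wcov w X := by
          simp only [transpose_transpose, ← Matrix.mul_assoc]
          rw [hRorth', Matrix.one_mul, Matrix.mul_assoc, hRorth', Matrix.mul_one]
        rwa [h3] at h2
    · have hp1 : p.1 = R * (Rᵀ * p.1) := by
        rw [← Matrix.mul_assoc, hRorth, Matrix.one_mul]
      have hp2' : p.2 = R.mulVec (centroid w X) + t0 := by rw [hp2, hc]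
      exact Prod.ext hp1 hp2'
  · rintro ⟨q, ⟨hq2, hqcols⟩, rfl⟩
    constructor
    · rw [hc, hq2]
    · intro i
      rw [col_mul]
      constructor
      · rw [orth_dot R hRorth']
        exact (hqcols i).1
      · rw [hC]
        exact eig_map R (wcov w X) hRorth' (lam j i) _ (hqcols i).2

end
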